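/- Let H : ℝ → ℝ be a nondecreasing right-continuous function and let μ_H be its associated Lebesgue–Stieltjes measure. Then for all real numbers a ≤ b, the integral over the half-open interval (a, b] of the function t ↦ (H(t) + H(t⁻))/2 with respect to μ_H equals (H(b)² − H(a)²)/2, where H(t⁻) denotes the left limit of H at t. -/

import Mathlib

open MeasureTheory Set

/-- For a nondecreasing right-continuous `H : ℝ → ℝ` (a Stieltjes function) with
associated Lebesgue–Stieltjes measure `μ_H`, and reals `a ≤ b`, the integral over
`(a, b]` of `t ↦ (H t + H t⁻) / 2` with respect to `μ_H` equals `(H b ^ 2 - H a ^ 2) / 2`. -/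
theorem midCDF_integral_Ioc (H : StieltjesFunction ℝ) (a b : ℝ) (hab : a ≤ b) :
    ∫ t in Set.Ioc a b, (H t + Function.leftLim H t) / 2 ∂H.measure
      = (H b ^ 2 - H a ^ 2) / 2 := by
  set μ := H.measure.restrict (Set.Ioc a b) with hμdef
  have hμuniv : μ Set.univ = ENNReal.ofReal (H b - H a) := by
    rw [hμdef, Measure.restrict_apply_univ, H.measure_Ioc]
  have hfin : IsFiniteMeasure μ := ⟨by simp [hμuniv]⟩
  have hmH : Measurable H := H.mono.measurable
  have hmL : Measurable (Function.leftLim H) := H.mono.leftLim.measurable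
  -- integrability helper
  have key : ∀ f : ℝ → ℝ, Measurable f →
      (∀ s ∈ Set.Ioc a b, H a ≤ f s ∧ f s ≤ H b) → Integrable f μ := by
    intro f hf hb
    refine Integrable.mono' (integrable_const (max |H a| |H b|))
      hf.aestronglyMeasurable ?_
    rw [hμdef, ae_restrict_iff' measurableSet_Ioc]
    filter_upwards with s hs
    obtain ⟨h1, h2⟩ := hb s hs
    rw [Real.norm_eq_abs]
    exact abs_le_max_abs_abs h1 h2
  have hIntH : Integrable H μ := key H hmH (fun s hs => ⟨H.mono hs.1.le, H.mono hs.2⟩)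
  have hIntL : Integrable (Function.leftLim H) μ := by
    refine key _ hmL (fun s hs => ⟨H.mono.le_leftLim hs.1, ?_⟩)
    exact (H.mono.leftLim_le le_rfl).trans (H.mono hs.2)
  -- slices
  have slice1 : ∀ s ∈ Set.Ioc a b, μ (Set.Ici s)
      = ENNReal.ofReal (H b - Function.leftLim H s) := by
    intro s hs
    rw [hμdef, Measure.restrict_apply measurableSet_Ici]
    have : Set.Ici s ∩ Set.Ioc a b = Set.Icc s b := by
      ext x
      simp only [mem_inter_iff, mem_Ici, mem_Ioc, mem_Icc]
      constructor
      · rintro ⟨h1, _, h3⟩; exact ⟨h1, h3⟩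
      · rintro ⟨h1, h2⟩; exact ⟨h1, lt_of_lt_of_le hs.1 h1, h2⟩
    rw [this, H.measure_Icc]
  have slice2 : ∀ s ∈ Set.Ioc a b, μ (Set.Ioi s) = ENNReal.ofReal (H b - H s) := by
    intro s hs
    rw [hμdef, Measure.restrict_apply measurableSet_Ioi]
    have : Set.Ioi s ∩ Set.Ioc a b = Set.Ioc s b := by
      ext x
      simp only [mem_inter_iff, mem_Ioi, mem_Ioc]
      constructor
      · rintro ⟨h1, _, h3⟩; exact ⟨h1, h3⟩
      · rintro ⟨h1, h2⟩; exact ⟨h1, hs.1.trans h1, h2⟩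
    rw [this, H.measure_Ioc]
  -- Fubini
  have hS : MeasurableSet {p : ℝ × ℝ | p.1 ≤ p.2} :=
    measurableSet_le measurable_fst measurable_snd
  have hT : MeasurableSet {p : ℝ × ℝ | p.1 < p.2} :=
    measurableSet_lt measurable_fst measurable_snd
  have e1 : (μ.prod μ) {p : ℝ × ℝ | p.1 ≤ p.2}
      = ∫⁻ s, ENNReal.ofReal (H b - Function.leftLim H s) ∂μ := by
    rw [Measure.prod_apply hS]
    rw [hμdef, setLIntegral_congr_fun measurableSet_Ioc
      (fun s hs => ?_)]
    have : Prod.mk s ⁻¹' {p : ℝ × ℝ | p.1 ≤ p.2} = Set.Ici s := by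
      ext y; simp [Set.mem_Ici]
    rw [this, ← hμdef, slice1 s hs]
  have e2 : (μ.prod μ) {p : ℝ × ℝ | p.1 < p.2}
      = ∫⁻ s, ENNReal.ofReal (H b - H s) ∂μ := by
    rw [Measure.prod_apply hT]
    rw [hμdef, setLIntegral_congr_fun measurableSet_Ioc
      (fun s hs => ?_)]
    have : Prod.mk s ⁻¹' {p : ℝ × ℝ | p.1 < p.2} = Set.Ioi s := by
      ext y; simp [Set.mem_Ioi]
    rw [this, ← hμdef, slice2 s hs]
  have e3 : (μ.prod μ) ({p : ℝ × ℝ | p.1 ≤ p.2}ᶜ) = (μ.prod μ) {p : ℝ × ℝ | p.1 < p.2} := by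
    have hc : {p : ℝ × ℝ | p.1 ≤ p.2}ᶜ = Prod.swap ⁻¹' {p : ℝ × ℝ | p.1 < p.2} := by
      ext p; simp [not_le]
    rw [hc, ← Measure.map_apply measurable_swap hT, Measure.prod_swap]
  have total : (μ.prod μ) {p : ℝ × ℝ | p.1 ≤ p.2} + (μ.prod μ) {p : ℝ × ℝ | p.1 < p.2}
      = ENNReal.ofReal ((H b - H a) * (H b - H a)) := by
    rw [← e3, measure_add_measure_compl hS, ← Set.univ_prod_univ, Measure.prod_prod,
      hμuniv, ← ENNReal.ofReal_mul (sub_nonneg.2 (H.mono hab))]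
  -- convert lintegrals to integrals
  have hae1 : 0 ≤ᵐ[μ] fun s => H b - Function.leftLim H s := by
    rw [hμdef, Filter.EventuallyLE, ae_restrict_iff' measurableSet_Ioc]
    filter_upwards with s hs
    have := (H.mono.leftLim_le le_rfl).trans (H.mono hs.2)
    simpa using this
  have hae2 : 0 ≤ᵐ[μ] fun s => H b - H s := by
    rw [hμdef, Filter.EventuallyLE, ae_restrict_iff' measurableSet_Ioc]
    filter_upwards with s hs
    simpa using H.mono hs.2
  have hI1 : Integrable (fun s => H b - Function.leftLim H s) μ :=
    (integrable_const (H b)).sub hIntL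
  have hI2 : Integrable (fun s => H b - H s) μ := (integrable_const (H b)).sub hIntH
  have c1 : (μ.prod μ) {p : ℝ × ℝ | p.1 ≤ p.2}
      = ENNReal.ofReal (∫ s, (H b - Function.leftLim H s) ∂μ) := by
    rw [e1, ← ofReal_integral_eq_lintegral_ofReal hI1 hae1]
  have c2 : (μ.prod μ) {p : ℝ × ℝ | p.1 < p.2}
      = ENNReal.ofReal (∫ s, (H b - H s) ∂μ) := by
    rw [e2, ← ofReal_integral_eq_lintegral_ofReal hI2 hae2]
  have int1nn : 0 ≤ ∫ s, (H b - Function.leftLim H s) ∂μ := integral_nonneg_of_ae hae1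
  have int2nn : 0 ≤ ∫ s, (H b - H s) ∂μ := integral_nonneg_of_ae hae2
  have reals : (∫ s, (H b - Function.leftLim H s) ∂μ) + (∫ s, (H b - H s) ∂μ)
      = (H b - H a) * (H b - H a) := by
    have := total
    rw [c1, c2, ← ENNReal.ofReal_add int1nn int2nn] at this
    rw [← ENNReal.ofReal_eq_ofReal_iff (by positivity)
      (mul_nonneg (sub_nonneg.2 (H.mono hab)) (sub_nonneg.2 (H.mono hab)))]
    exact this
  -- unfold the integrals of differences
  have mtr : (μ Set.univ).toReal = H b - H a := by
    rw [hμuniv, ENNReal.toReal_ofReal (sub_nonneg.2 (H.mono hab))]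
  have s1 : (∫ s, (H b - Function.leftLim H s) ∂μ)
      = H b * (H b - H a) - ∫ s, Function.leftLim H s ∂μ := by
    rw [integral_sub (integrable_const (H b)) hIntL, integral_const, measureReal_def, mtr, smul_eq_mul,
      mul_comm]
  have s2 : (∫ s, (H b - H s) ∂μ) = H b * (H b - H a) - ∫ s, H s ∂μ := by
    rw [integral_sub (integrable_const (H b)) hIntH, integral_const, measureReal_def, mtr, smul_eq_mul,
      mul_comm]
  rw [s1, s2] at reals
  have goalform : ∫ t in Set.Ioc a b, (H t + Function.leftLim H t) / 2 ∂H.measure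
      = ((∫ s, H s ∂μ) + ∫ s, Function.leftLim H s ∂μ) / 2 := by
    rw [hμdef] at hIntH hIntL ⊢
    rw [← integral_add hIntH hIntL, integral_div]
  rw [goalform]
  nlinarith [reals]
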